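/- arXiv:2504.20017 — 3 statements merged into one kernel-verified Lean document; each statement's English description precedes it below -/
import Mathlib

section
/- Let n = 4k for a positive integer k, and define a matrix A of order n by a_{ij} = (i-1)n + j if i and j lie in the same part of the partition {B_out, B_in}, and a_{ij} = n²+1-((i-1)n+j) otherwise. Then for every column j, the sum ∑_{i=1}^n a_{ij} = n(n²+1)/2. -/
open Finset

private lemma gauss2 (a b : ℕ) (h : a ≤ b) :
    2 * ∑ i ∈ Ioc a b, (i : ℤ) = b * (b + 1) - a * (a + 1) := by
  induction b, h using Nat.le_induction with
  | base => simp
  | succ b hb ih =>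
    rw [Finset.sum_Ioc_succ_top (by omega)]
    push_cast
    push_cast at ih
    linarith

private lemma affine_sum (a b : ℕ) (h : a ≤ b) (c d : ℤ) :
    2 * ∑ i ∈ Ioc a b, (c * (i : ℤ) + d) =
      c * ((b : ℤ) * (b + 1) - (a : ℤ) * (a + 1)) + 2 * ((b : ℤ) - a) * d := by
  rw [Finset.sum_add_distrib, ← Finset.mul_sum, Finset.sum_const, Nat.card_Ioc, nsmul_eq_mul]
  push_cast [Nat.cast_sub h]
  linear_combination c * gauss2 a b h

theorem doubly_even_col_sums (k n : ℕ) (hk : 0 < k) (hn : n = 4 * k)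
    (Bout : Finset ℕ) (hB : Bout = Icc 1 k ∪ Icc (3 * k + 1) (4 * k))
    (a : ℕ → ℕ → ℕ)
    (ha : ∀ i j, a i j =
      if (i ∈ Bout ↔ j ∈ Bout) then (i - 1) * n + j
      else n ^ 2 + 1 - ((i - 1) * n + j)) :
    ∀ j ∈ Icc 1 n, (∑ i ∈ Icc 1 n, a i j) = n * (n ^ 2 + 1) / 2 := by
  subst hn
  subst hB
  intro j hj
  rw [mem_Icc] at hj
  have hrhs : 4 * k * ((4 * k) ^ 2 + 1) / 2 = 2 * (k * ((4 * k) ^ 2 + 1)) := by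
    rw [show 4 * k * ((4 * k) ^ 2 + 1) = 2 * (2 * (k * ((4 * k) ^ 2 + 1))) by ring,
      Nat.mul_div_cancel_left _ (by norm_num)]
  rw [hrhs]
  have key : (2 : ℤ) * ∑ i ∈ Icc 1 (4 * k), (a i j : ℤ)
      = 4 * ((k : ℤ) * ((4 * (k : ℤ)) ^ 2 + 1)) := by
    have hIcc : Icc 1 (4 * k) = Ioc 0 (4 * k) := Finset.Icc_add_one_left_eq_Ioc 0 (4 * k)
    rw [hIcc,
      ← Finset.sum_Ioc_consecutive (fun i => (a i j : ℤ))
        (show 0 ≤ 3 * k by omega) (show 3 * k ≤ 4 * k by omega),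
      ← Finset.sum_Ioc_consecutive (fun i => (a i j : ℤ))
        (show 0 ≤ k by omega) (show k ≤ 3 * k by omega)]
    have hle : ∀ i : ℕ, 1 ≤ i → i ≤ 4 * k → (i - 1) * (4 * k) + j ≤ (4 * k) ^ 2 + 1 := by
      intro i h1 h2
      have h0 : ((i - 1) + 1) * (4 * k) = (i - 1) * (4 * k) + 4 * k := by ring
      have h3 : ((i - 1) + 1) * (4 * k) ≤ (4 * k) * (4 * k) :=
        Nat.mul_le_mul_right _ (by omega)
      have h4 : (4 * k) ^ 2 = (4 * k) * (4 * k) := sq (4 * k)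
      linarith [hj.2]
    by_cases hjB : j ∈ Icc 1 k ∪ Icc (3 * k + 1) (4 * k)
    · have p1 : ∑ i ∈ Ioc 0 k, (a i j : ℤ)
          = ∑ i ∈ Ioc 0 k, ((4 * (k : ℤ)) * i + ((j : ℤ) - 4 * k)) := by
        refine Finset.sum_congr rfl fun i hi => ?_
        rw [mem_Ioc] at hi
        rw [ha i j, if_pos (iff_of_true (by simp only [mem_union, mem_Icc]; omega) hjB)]
        push_cast [Nat.cast_sub (show 1 ≤ i by omega)]
        ring
      have p3 : ∑ i ∈ Ioc (3 * k) (4 * k), (a i j : ℤ)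
          = ∑ i ∈ Ioc (3 * k) (4 * k), ((4 * (k : ℤ)) * i + ((j : ℤ) - 4 * k)) := by
        refine Finset.sum_congr rfl fun i hi => ?_
        rw [mem_Ioc] at hi
        rw [ha i j, if_pos (iff_of_true (by simp only [mem_union, mem_Icc]; omega) hjB)]
        push_cast [Nat.cast_sub (show 1 ≤ i by omega)]
        ring
      have p2 : ∑ i ∈ Ioc k (3 * k), (a i j : ℤ)
          = ∑ i ∈ Ioc k (3 * k),
              ((-(4 * (k : ℤ))) * i + ((4 * (k : ℤ)) ^ 2 + 1 + 4 * k - j)) := by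
        refine Finset.sum_congr rfl fun i hi => ?_
        rw [mem_Ioc] at hi
        have hiB : i ∉ Icc 1 k ∪ Icc (3 * k + 1) (4 * k) := by
          simp only [mem_union, mem_Icc]; omega
        rw [ha i j, if_neg (fun h => hiB (h.mpr hjB))]
        push_cast [Nat.cast_sub (hle i (by omega) (by omega)),
          Nat.cast_sub (show 1 ≤ i by omega)]
        ring
      rw [p1, p2, p3]
      have A1 := affine_sum 0 k (by omega) (4 * (k : ℤ)) ((j : ℤ) - 4 * k)
      have A2 := affine_sum k (3 * k) (by omega) (-(4 * (k : ℤ)))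
        ((4 * (k : ℤ)) ^ 2 + 1 + 4 * k - j)
      have A3 := affine_sum (3 * k) (4 * k) (by omega) (4 * (k : ℤ)) ((j : ℤ) - 4 * k)
      push_cast at A1 A2 A3
      linear_combination A1 + A2 + A3
    · have p1 : ∑ i ∈ Ioc 0 k, (a i j : ℤ)
          = ∑ i ∈ Ioc 0 k,
              ((-(4 * (k : ℤ))) * i + ((4 * (k : ℤ)) ^ 2 + 1 + 4 * k - j)) := by
        refine Finset.sum_congr rfl fun i hi => ?_
        rw [mem_Ioc] at hi
        have hiB : i ∈ Icc 1 k ∪ Icc (3 * k + 1) (4 * k) := by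
          simp only [mem_union, mem_Icc]; omega
        rw [ha i j, if_neg (fun h => hjB (h.mp hiB))]
        push_cast [Nat.cast_sub (hle i (by omega) (by omega)),
          Nat.cast_sub (show 1 ≤ i by omega)]
        ring
      have p3 : ∑ i ∈ Ioc (3 * k) (4 * k), (a i j : ℤ)
          = ∑ i ∈ Ioc (3 * k) (4 * k),
              ((-(4 * (k : ℤ))) * i + ((4 * (k : ℤ)) ^ 2 + 1 + 4 * k - j)) := by
        refine Finset.sum_congr rfl fun i hi => ?_
        rw [mem_Ioc] at hi
        have hiB : i ∈ Icc 1 k ∪ Icc (3 * k + 1) (4 * k) := by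
          simp only [mem_union, mem_Icc]; omega
        rw [ha i j, if_neg (fun h => hjB (h.mp hiB))]
        push_cast [Nat.cast_sub (hle i (by omega) (by omega)),
          Nat.cast_sub (show 1 ≤ i by omega)]
        ring
      have p2 : ∑ i ∈ Ioc k (3 * k), (a i j : ℤ)
          = ∑ i ∈ Ioc k (3 * k), ((4 * (k : ℤ)) * i + ((j : ℤ) - 4 * k)) := by
        refine Finset.sum_congr rfl fun i hi => ?_
        rw [mem_Ioc] at hi
        have hiB : i ∉ Icc 1 k ∪ Icc (3 * k + 1) (4 * k) := by
          simp only [mem_union, mem_Icc]; omega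
        rw [ha i j, if_pos (iff_of_false hiB hjB)]
        push_cast [Nat.cast_sub (show 1 ≤ i by omega)]
        ring
      rw [p1, p2, p3]
      have A1 := affine_sum 0 k (by omega) (-(4 * (k : ℤ)))
        ((4 * (k : ℤ)) ^ 2 + 1 + 4 * k - j)
      have A2 := affine_sum k (3 * k) (by omega) (4 * (k : ℤ)) ((j : ℤ) - 4 * k)
      have A3 := affine_sum (3 * k) (4 * k) (by omega) (-(4 * (k : ℤ)))
        ((4 * (k : ℤ)) ^ 2 + 1 + 4 * k - j)
      push_cast at A1 A2 A3
      linear_combination A1 + A2 + A3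
  have : ((∑ i ∈ Icc 1 (4 * k), a i j : ℕ) : ℤ) = 2 * ((k : ℤ) * ((4 * (k : ℤ)) ^ 2 + 1)) := by
    push_cast
    linarith [key]
  exact_mod_cast this
end

section
/- Let n = 4k for a positive integer k and let A be defined by a_{ij} = (i-1)n + j if (i ∈ B_out ↔ j ∈ B_out) and a_{ij} = n²+1-((i-1)n+j) otherwise. Then the map (i,j) ↦ a_{ij} from {1,...,n}×{1,...,n} to {1,...,n²} is a bijection. -/
lemma base_bounds (n i j : ℕ) (hi1 : 1 ≤ i) (hi2 : i ≤ n) (hj1 : 1 ≤ j) (hj2 : j ≤ n) :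
    1 ≤ (i - 1) * n + j ∧ (i - 1) * n + j ≤ n ^ 2 := by
  obtain ⟨p, rfl⟩ : ∃ p, i = p + 1 := ⟨i - 1, by omega⟩
  simp only [Nat.add_sub_cancel]
  constructor
  · omega
  · have h1 : p * n ≤ (n - 1) * n := Nat.mul_le_mul_right n (by omega)
    have h2 : (n - 1) * n + n = n ^ 2 := by
      cases n with
      | zero => omega
      | succ m => simp only [Nat.succ_sub_one, pow_two]; ring
    omega

lemma base_inj (n i j i' j' : ℕ) (hj1 : 1 ≤ j) (hj2 : j ≤ n) (hj1' : 1 ≤ j') (hj2' : j' ≤ n)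
    (h : (i - 1) * n + j = (i' - 1) * n + j') (hi : 1 ≤ i) (hi' : 1 ≤ i') :
    i = i' ∧ j = j' := by
  obtain ⟨p, rfl⟩ : ∃ p, i = p + 1 := ⟨i - 1, by omega⟩
  obtain ⟨q, rfl⟩ : ∃ q, i' = q + 1 := ⟨i' - 1, by omega⟩
  simp only [Nat.add_sub_cancel] at h
  rcases Nat.lt_trichotomy p q with h1 | h1 | h1
  · have := Nat.mul_le_mul_right n (show p + 1 ≤ q from h1)
    have : p * n + n ≤ q * n := by nlinarith
    omega
  · subst h1; omega
  · have := Nat.mul_le_mul_right n (show q + 1 ≤ p from h1)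
    have : q * n + n ≤ p * n := by nlinarith
    omega

lemma comp_eq (n i j : ℕ) (hi1 : 1 ≤ i) (hi2 : i ≤ n) (hj1 : 1 ≤ j) (hj2 : j ≤ n) :
    n ^ 2 + 1 - ((i - 1) * n + j) = (n + 1 - i - 1) * n + (n + 1 - j) := by
  have hb := base_bounds n i j hi1 hi2 hj1 hj2
  have e1 : n + 1 - i - 1 = n - i := by omega
  rw [e1]
  zify [hb.2, hi1, hi2, hj2, show (i-1)*n + j ≤ n^2 + 1 by omega, show j ≤ n + 1 by omega]
  ring

lemma base_surj (n v : ℕ) (hn : 1 ≤ n) (hv1 : 1 ≤ v) (hv2 : v ≤ n ^ 2) :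
    ∃ i j, 1 ≤ i ∧ i ≤ n ∧ 1 ≤ j ∧ j ≤ n ∧ (i - 1) * n + j = v := by
  refine ⟨(v - 1) / n + 1, (v - 1) % n + 1, Nat.succ_le_succ (Nat.zero_le _), ?_,
    Nat.succ_le_succ (Nat.zero_le _), ?_, ?_⟩
  · have h1 : (v - 1) / n ≤ (n ^ 2 - 1) / n := Nat.div_le_div_right (by omega)
    have h3 : n ^ 2 - 1 = n * (n - 1) + (n - 1) := by
      cases n with
      | zero => omega
      | succ m => simp only [Nat.succ_sub_one, pow_two]; ring_nf; omega
    have h2 : (n ^ 2 - 1) / n = n - 1 := by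
      rw [h3, Nat.mul_add_div (by omega), Nat.div_eq_of_lt (by omega)]; omega
    omega
  · have := Nat.mod_lt (v - 1) (show 0 < n by omega)
    omega
  · simp only [Nat.add_sub_cancel]
    have := Nat.div_add_mod (v - 1) n
    rw [Nat.mul_comm] at this
    omega
open Finset

theorem doubly_even_bijective (k n : ℕ) (hk : 0 < k) (hn : n = 4 * k)
    (Bout : Finset ℕ) (hB : Bout = Icc 1 k ∪ Icc (3 * k + 1) (4 * k))
    (a : ℕ → ℕ → ℕ)
    (ha : ∀ i j, a i j =
      if (i ∈ Bout ↔ j ∈ Bout) then (i - 1) * n + j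
      else n ^ 2 + 1 - ((i - 1) * n + j)) :
    Set.BijOn (fun p : ℕ × ℕ => a p.1 p.2)
      (Set.Icc 1 n ×ˢ Set.Icc 1 n) (Set.Icc 1 (n ^ 2)) := by
  have hn1 : 1 ≤ n := by omega
  -- symmetry of Bout
  have hsym : ∀ i, 1 ≤ i → i ≤ n → (i ∈ Bout ↔ n + 1 - i ∈ Bout) := by
    intro i h1 h2
    subst hB hn
    simp only [Finset.mem_union, Finset.mem_Icc]
    omega
  refine ⟨?_, ?_, ?_⟩
  · -- MapsTo
    rintro ⟨i, j⟩ ⟨⟨hi1, hi2⟩, ⟨hj1, hj2⟩⟩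
    have hb := base_bounds n i j hi1 hi2 hj1 hj2
    simp only [Set.mem_Icc]
    rw [ha]
    split <;> omega
  · -- InjOn
    rintro ⟨i, j⟩ ⟨⟨hi1, hi2⟩, ⟨hj1, hj2⟩⟩ ⟨i', j'⟩ ⟨⟨hi1', hi2'⟩, ⟨hj1', hj2'⟩⟩ h
    simp only at h
    rw [ha, ha] at h
    have hb := base_bounds n i j hi1 hi2 hj1 hj2
    have hb' := base_bounds n i' j' hi1' hi2' hj1' hj2'
    by_cases hc : (i ∈ Bout ↔ j ∈ Bout) <;> by_cases hc' : (i' ∈ Bout ↔ j' ∈ Bout)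
    · rw [if_pos hc, if_pos hc'] at h
      obtain ⟨e1, e2⟩ := base_inj n i j i' j' hj1 hj2 hj1' hj2' h hi1 hi1'
      exact Prod.ext e1 e2
    · rw [if_pos hc, if_neg hc'] at h
      rw [comp_eq n i' j' hi1' hi2' hj1' hj2'] at h
      obtain ⟨e1, e2⟩ := base_inj n i j (n + 1 - i') (n + 1 - j') hj1 hj2 (by omega) (by omega)
        h hi1 (by omega)
      exfalso
      apply hc'
      rw [hsym i' hi1' hi2', hsym j' hj1' hj2', show n + 1 - i' = i from e1.symm,
        show n + 1 - j' = j from e2.symm]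
      exact hc
    · rw [if_neg hc, if_pos hc'] at h
      rw [comp_eq n i j hi1 hi2 hj1 hj2] at h
      obtain ⟨e1, e2⟩ := base_inj n (n + 1 - i) (n + 1 - j) i' j' (by omega) (by omega) hj1' hj2'
        h (by omega) hi1'
      exfalso
      apply hc
      rw [hsym i hi1 hi2, hsym j hj1 hj2, e1, e2]
      exact hc'
    · rw [if_neg hc, if_neg hc'] at h
      have : (i - 1) * n + j = (i' - 1) * n + j' := by omega
      obtain ⟨e1, e2⟩ := base_inj n i j i' j' hj1 hj2 hj1' hj2' this hi1 hi1'
      exact Prod.ext e1 e2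
  · -- SurjOn
    rintro v ⟨hv1, hv2⟩
    obtain ⟨i, j, hi1, hi2, hj1, hj2, hij⟩ := base_surj n v hn1 hv1 hv2
    have hb := base_bounds n i j hi1 hi2 hj1 hj2
    by_cases hc : (i ∈ Bout ↔ j ∈ Bout)
    · exact ⟨(i, j), ⟨⟨hi1, hi2⟩, ⟨hj1, hj2⟩⟩, by simp only; rw [ha, if_pos hc]; exact hij⟩
    · refine ⟨(n + 1 - i, n + 1 - j), ⟨⟨by omega, by omega⟩, ⟨by omega, by omega⟩⟩, ?_⟩
      simp only
      have hc2 : ¬ (n + 1 - i ∈ Bout ↔ n + 1 - j ∈ Bout) := by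
        rw [← hsym i hi1 hi2, ← hsym j hj1 hj2]; exact hc
      rw [ha, if_neg hc2, ← comp_eq n i j hi1 hi2 hj1 hj2]
      omega
end

section
/- Let p be an odd positive integer and n = 2p. For ℓ ∈ {1,2,3,4}, let A^ℓ be an order-p magic square whose entries are {(ℓ−1)p²+1, ..., ℓp²}, with all row, column, and diagonal sums equal to C(A^ℓ) = p(p²+1)/2 + p(ℓ−1)p². Form the block matrix A = [[A^1, A^3],[A^4, A^2]]. Then every column of A sums to n(n²+1)/2, every row in the top half sums to n(n²+1)/2 − p³, and every row in the bottom half sums to n(n²+1)/2 + p³. -/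
open Finset

lemma sum_split_aux (p n : ℕ) (hn : n = 2 * p) (f : ℕ → ℤ) :
    (∑ i ∈ Finset.Icc 1 n, f i) =
      (∑ i ∈ Finset.Icc 1 p, f i) + ∑ i ∈ Finset.Icc 1 p, f (i + p) := by
  subst hn
  have h1 : Finset.Icc (p + 1) (2 * p) = (Finset.Icc 1 p).map (addRightEmbedding p) := by
    rw [Finset.map_add_right_Icc]
    congr 1 <;> omega
  have h2 : Finset.Icc 1 (2 * p) = Finset.Icc 1 p ∪ Finset.Icc (p + 1) (2 * p) := by
    ext x; simp only [Finset.mem_Icc, Finset.mem_union]; omega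
  rw [h2, Finset.sum_union, h1, Finset.sum_map]
  · rfl
  · rw [Finset.disjoint_left]
    intro a ha hb
    simp only [Finset.mem_Icc] at ha hb
    omega




theorem block_construction_P1_P2_P3 (p n : ℕ) (hp : 0 < p) (hodd : Odd p)
    (hn : n = 2 * p)
    (Q : ℕ → ℕ → ℕ → ℤ)
    (hbij : ∀ ℓ ∈ Finset.Icc 1 4,
      Set.BijOn (fun q : ℕ × ℕ => Q ℓ q.1 q.2)
        (Set.Icc 1 p ×ˢ Set.Icc 1 p)
        (Set.Icc ((ℓ - 1 : ℕ) * p ^ 2 + 1 : ℤ) ((ℓ : ℤ) * p ^ 2)))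
    (hrow : ∀ ℓ ∈ Finset.Icc 1 4, ∀ i ∈ Finset.Icc 1 p,
      (∑ j ∈ Finset.Icc 1 p, Q ℓ i j) =
        (p : ℤ) * ((p : ℤ) ^ 2 + 1) / 2 + (p : ℤ) * (ℓ - 1 : ℕ) * (p : ℤ) ^ 2)
    (hcol : ∀ ℓ ∈ Finset.Icc 1 4, ∀ j ∈ Finset.Icc 1 p,
      (∑ i ∈ Finset.Icc 1 p, Q ℓ i j) =
        (p : ℤ) * ((p : ℤ) ^ 2 + 1) / 2 + (p : ℤ) * (ℓ - 1 : ℕ) * (p : ℤ) ^ 2)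
    (hdiag : ∀ ℓ ∈ Finset.Icc 1 4,
      (∑ i ∈ Finset.Icc 1 p, Q ℓ i i) =
        (p : ℤ) * ((p : ℤ) ^ 2 + 1) / 2 + (p : ℤ) * (ℓ - 1 : ℕ) * (p : ℤ) ^ 2)
    (hanti : ∀ ℓ ∈ Finset.Icc 1 4,
      (∑ i ∈ Finset.Icc 1 p, Q ℓ i (p + 1 - i)) =
        (p : ℤ) * ((p : ℤ) ^ 2 + 1) / 2 + (p : ℤ) * (ℓ - 1 : ℕ) * (p : ℤ) ^ 2)
    (A : ℕ → ℕ → ℤ)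
    (hA : ∀ i j, A i j =
      if i ≤ p then (if j ≤ p then Q 1 i j else Q 3 i (j - p))
      else (if j ≤ p then Q 4 (i - p) j else Q 2 (i - p) (j - p))) :
    (∀ j ∈ Finset.Icc 1 n,
      (∑ i ∈ Finset.Icc 1 n, A i j) = (n : ℤ) * ((n : ℤ) ^ 2 + 1) / 2) ∧
    (∀ i ∈ Finset.Icc 1 p,
      (∑ j ∈ Finset.Icc 1 n, A i j) =
        (n : ℤ) * ((n : ℤ) ^ 2 + 1) / 2 - (p : ℤ) ^ 3) ∧
    (∀ i ∈ Finset.Icc (p + 1) n,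
      (∑ j ∈ Finset.Icc 1 n, A i j) =
        (n : ℤ) * ((n : ℤ) ^ 2 + 1) / 2 + (p : ℤ) ^ 3) := by
  obtain ⟨m, hm⟩ := hodd
  have hk : ((p:ℤ)) ^ 2 + 1 = 2 * (2 * (m:ℤ) ^ 2 + 2 * m + 1) := by
    have : (p:ℤ) = 2 * m + 1 := by exact_mod_cast congrArg (Nat.cast : ℕ → ℤ) hm
    rw [this]; ring
  set k : ℤ := 2 * (m:ℤ) ^ 2 + 2 * m + 1 with hkdef
  have hD : (p:ℤ) * ((p:ℤ) ^ 2 + 1) / 2 = (p:ℤ) * k := by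
    rw [hk, show (p:ℤ) * (2 * k) = 2 * ((p:ℤ) * k) by ring,
      Int.mul_ediv_cancel_left _ two_ne_zero]
  have hN : (n : ℤ) * ((n : ℤ) ^ 2 + 1) / 2 = (p:ℤ) * (4 * (p:ℤ) ^ 2 + 1) := by
    have hn' : (n:ℤ) = 2 * p := by exact_mod_cast congrArg (Nat.cast : ℕ → ℤ) hn
    rw [hn', show (2 * (p:ℤ)) * ((2 * (p:ℤ)) ^ 2 + 1) = 2 * ((p:ℤ) * (4 * (p:ℤ) ^ 2 + 1)) by ring,
      Int.mul_ediv_cancel_left _ two_ne_zero]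
  have m1 : (1:ℕ) ∈ Finset.Icc 1 4 := by decide
  have m2 : (2:ℕ) ∈ Finset.Icc 1 4 := by decide
  have m3 : (3:ℕ) ∈ Finset.Icc 1 4 := by decide
  have m4 : (4:ℕ) ∈ Finset.Icc 1 4 := by decide
  refine ⟨?_, ?_, ?_⟩
  · intro j hj
    simp only [Finset.mem_Icc] at hj
    rw [sum_split_aux p n hn]
    by_cases hjp : j ≤ p
    · have hj' : j ∈ Finset.Icc 1 p := Finset.mem_Icc.mpr ⟨hj.1, hjp⟩
      have t1 : ∑ i ∈ Finset.Icc 1 p, A i j = ∑ i ∈ Finset.Icc 1 p, Q 1 i j :=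
        Finset.sum_congr rfl fun i hi => by
          simp only [Finset.mem_Icc] at hi
          rw [hA, if_pos hi.2, if_pos hjp]
      have t2 : ∑ i ∈ Finset.Icc 1 p, A (i + p) j = ∑ i ∈ Finset.Icc 1 p, Q 4 i j :=
        Finset.sum_congr rfl fun i hi => by
          simp only [Finset.mem_Icc] at hi
          rw [hA, if_neg (by omega), if_pos hjp]
          congr 1
          omega
      rw [t1, t2, hcol 1 m1 j hj', hcol 4 m4 j hj', hD, hN]
      norm_num
      linear_combination (-(p:ℤ)) * hk
    · have hj' : j - p ∈ Finset.Icc 1 p := Finset.mem_Icc.mpr ⟨by omega, by omega⟩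
      have t1 : ∑ i ∈ Finset.Icc 1 p, A i j = ∑ i ∈ Finset.Icc 1 p, Q 3 i (j - p) :=
        Finset.sum_congr rfl fun i hi => by
          simp only [Finset.mem_Icc] at hi
          rw [hA, if_pos hi.2, if_neg hjp]
      have t2 : ∑ i ∈ Finset.Icc 1 p, A (i + p) j = ∑ i ∈ Finset.Icc 1 p, Q 2 i (j - p) :=
        Finset.sum_congr rfl fun i hi => by
          simp only [Finset.mem_Icc] at hi
          rw [hA, if_neg (by omega), if_neg hjp]
          congr 1
          omega
      rw [t1, t2, hcol 3 m3 _ hj', hcol 2 m2 _ hj', hD, hN]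
      norm_num
      linear_combination (-(p:ℤ)) * hk
  · intro i hi
    simp only [Finset.mem_Icc] at hi
    rw [sum_split_aux p n hn]
    have hi' : i ∈ Finset.Icc 1 p := Finset.mem_Icc.mpr hi
    have t1 : ∑ j ∈ Finset.Icc 1 p, A i j = ∑ j ∈ Finset.Icc 1 p, Q 1 i j :=
      Finset.sum_congr rfl fun j hj => by
        simp only [Finset.mem_Icc] at hj
        rw [hA, if_pos hi.2, if_pos hj.2]
    have t2 : ∑ j ∈ Finset.Icc 1 p, A i (j + p) = ∑ j ∈ Finset.Icc 1 p, Q 3 i j :=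
      Finset.sum_congr rfl fun j hj => by
        simp only [Finset.mem_Icc] at hj
        rw [hA, if_pos hi.2, if_neg (by omega)]
        congr 1
        omega
    rw [t1, t2, hrow 1 m1 i hi', hrow 3 m3 i hi', hD, hN]
    norm_num
    linear_combination (-(p:ℤ)) * hk
  · intro i hi
    simp only [Finset.mem_Icc] at hi
    rw [sum_split_aux p n hn]
    have hi' : i - p ∈ Finset.Icc 1 p := Finset.mem_Icc.mpr ⟨by omega, by omega⟩
    have hip : ¬ i ≤ p := by omega
    have t1 : ∑ j ∈ Finset.Icc 1 p, A i j = ∑ j ∈ Finset.Icc 1 p, Q 4 (i - p) j :=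
      Finset.sum_congr rfl fun j hj => by
        simp only [Finset.mem_Icc] at hj
        rw [hA, if_neg hip, if_pos hj.2]
    have t2 : ∑ j ∈ Finset.Icc 1 p, A i (j + p) = ∑ j ∈ Finset.Icc 1 p, Q 2 (i - p) j :=
      Finset.sum_congr rfl fun j hj => by
        simp only [Finset.mem_Icc] at hj
        rw [hA, if_neg hip, if_neg (by omega)]
        congr 1
        omega
    rw [t1, t2, hrow 4 m4 _ hi', hrow 2 m2 _ hi', hD, hN]
    norm_num
    linear_combination (-(p:ℤ)) * hk
end
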